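/- Let d be a natural number, h > 0 a real number, E a complex Banach space, and f : ℝ^d → E a bounded continuous function. If the Bochner integral ∫_{ℝ^d} e^{−‖x−y‖²/h} f(x) dx equals 0 for every y ∈ ℝ^d, then f = 0. (Injectivity of Gaussian convolution; this is the key step showing that the maps T̃ and S̃ defined by Gaussian averaging along an action of ℝ^d are injective.) -/

import Mathlib

open MeasureTheory

open scoped RealInnerProductSpace FourierTransform

section Aux

variable {V : Type*} [NormedAddCommGroup V] [InnerProductSpace ℝ V] [FiniteDimensional ℝ V]
  [MeasurableSpace V] [BorelSpace V]

lemma aux_integrable {h : ℝ} (hh : 0 < h) (a : ℝ) :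
    Integrable (fun x : V => Real.exp (a * ‖x‖ - ‖x‖ ^ 2 / h)) := by
  have hb : (0:ℝ) < (2*h)⁻¹ := by positivity
  have h2 := GaussianFourier.integrable_cexp_neg_mul_sq_norm_add
    (V := V) (b := (((2*h)⁻¹ : ℝ) : ℂ)) (by simpa using hb) 0 0
  have h3 : Integrable (fun v : V => Real.exp (-(2*h)⁻¹ * ‖v‖^2)) := by
    apply h2.norm.congr
    filter_upwards with v
    rw [Complex.norm_exp]
    congr 1
    simp [← Complex.ofReal_pow]
  have h4 : Integrable (fun v : V => Real.exp (a^2 * h/2) * Real.exp (-(2*h)⁻¹ * ‖v‖^2)) :=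
    h3.const_mul _
  refine h4.mono' (Continuous.aestronglyMeasurable (by fun_prop)) ?_
  filter_upwards with x
  rw [Real.norm_eq_abs, abs_of_pos (Real.exp_pos _), ← Real.exp_add]
  apply Real.exp_le_exp.2
  rw [← sub_nonneg]
  have h0 : h ≠ 0 := ne_of_gt hh
  have key : a^2 * h/2 + -(2*h)⁻¹ * ‖x‖^2 - (a * ‖x‖ - ‖x‖^2/h) = (‖x‖ - a*h)^2 / (2*h) := by
    field_simp
    ring
  rw [key]
  positivity

lemma key_int {h : ℝ} (hh : 0 < h) {g : V → ℂ} (hg : Continuous g) {C : ℝ}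
    (hC : ∀ x, ‖g x‖ ≤ C) (ξ : V) (z : ℂ) :
    Integrable (fun x : V => Complex.exp (z * (⟪x, ξ⟫ : ℂ)) * (Real.exp (-‖x‖^2/h) • g x)) := by
  have hC0 : (0:ℝ) ≤ C := le_trans (norm_nonneg _) (hC 0)
  have hinner : Continuous fun x : V => ⟪x, ξ⟫ := continuous_id.inner continuous_const
  refine ((aux_integrable hh (‖z‖*‖ξ‖)).mul_const C).mono'
    (Continuous.aestronglyMeasurable ?_) ?_
  · exact (Complex.continuous_exp.comp
      (continuous_const.mul (Complex.continuous_ofReal.comp hinner))).mul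
      ((Real.continuous_exp.comp (by fun_prop)).smul hg)
  · filter_upwards with x
    have hr : |⟪x, ξ⟫| ≤ ‖x‖ * ‖ξ‖ := abs_real_inner_le_norm x ξ
    have h1 : ‖Complex.exp (z * (⟪x, ξ⟫ : ℂ))‖ = Real.exp (z.re * ⟪x, ξ⟫) := by
      rw [Complex.norm_exp]
      congr 1
      simp [Complex.mul_re]
    rw [norm_mul, norm_smul, h1]
    simp only [Real.norm_eq_abs, Real.abs_exp]
    have h2 : z.re * ⟪x, ξ⟫ ≤ ‖z‖*‖ξ‖*‖x‖ := by
      calc z.re * ⟪x, ξ⟫ ≤ |z.re * ⟪x, ξ⟫| := le_abs_self _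
        _ = |z.re| * |⟪x, ξ⟫| := abs_mul _ _
        _ ≤ ‖z‖ * (‖x‖ * ‖ξ‖) := by
            refine mul_le_mul ?_ hr (abs_nonneg _) (norm_nonneg _)
            exact Complex.abs_re_le_norm z
        _ = ‖z‖*‖ξ‖*‖x‖ := by ring
    calc Real.exp (z.re * ⟪x, ξ⟫) * (Real.exp (-‖x‖^2/h) * ‖g x‖)
        ≤ Real.exp (‖z‖*‖ξ‖*‖x‖) * (Real.exp (-‖x‖^2/h) * C) := by
          gcongr
          exact hC x
      _ = Real.exp (‖z‖*‖ξ‖*‖x‖ - ‖x‖^2/h) * C := by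
          rw [← mul_assoc, ← Real.exp_add]
          congr 2
          ring

lemma scalar_case {d : ℕ} {h : ℝ} (hh : 0 < h)
    {g : EuclideanSpace ℝ (Fin d) → ℂ} (hg : Continuous g) {C : ℝ}
    (hC : ∀ x, ‖g x‖ ≤ C)
    (hint : ∀ y : EuclideanSpace ℝ (Fin d),
      (∫ x : EuclideanSpace ℝ (Fin d), Real.exp (-‖x - y‖ ^ 2 / h) • g x) = 0) :
    ∀ x, g x = 0 := by
  have hC0 : (0:ℝ) ≤ C := le_trans (norm_nonneg _) (hC 0)
  have h0 : h ≠ 0 := ne_of_gt hh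
  set w : EuclideanSpace ℝ (Fin d) → ℂ := fun x => Real.exp (-‖x‖^2/h) • g x with hw
  have hinner : ∀ ξ, Continuous fun x : EuclideanSpace ℝ (Fin d) => ⟪x, ξ⟫ :=
    fun ξ => continuous_id.inner continuous_const
  have hwcont : Continuous w := (Real.continuous_exp.comp (by fun_prop)).smul hg
  have hwint : Integrable w := by
    have h1 := (aux_integrable (V := EuclideanSpace ℝ (Fin d)) hh 0).mul_const C
    simp only [zero_mul, zero_sub] at h1
    refine h1.mono' hwcont.aestronglyMeasurable ?_
    filter_upwards with x
    simp only [hw]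
    rw [norm_smul, Real.norm_eq_abs, abs_of_pos (Real.exp_pos _), neg_div]
    exact mul_le_mul_of_nonneg_left (hC x) (Real.exp_pos _).le
  -- Fourier transform of w vanishes
  have hFour : ∀ ξ, 𝓕 w ξ = 0 := by
    intro ξ
    set Φ : ℂ → ℂ := fun z => ∫ x, Complex.exp (z * (⟪x, ξ⟫ : ℂ)) * w x with hΦ
    have hInt : ∀ z : ℂ, Integrable (fun x => Complex.exp (z * (⟪x, ξ⟫ : ℂ)) * w x) :=
      fun z => key_int hh hg hC ξ z
    -- vanishing on the reals
    have hreal : ∀ t : ℝ, Φ (t : ℂ) = 0 := by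
      intro t
      set y : EuclideanSpace ℝ (Fin d) := ((h*t/2) : ℝ) • ξ with hy
      have hkey : ∀ x, Complex.exp ((t:ℂ) * (⟪x, ξ⟫ : ℂ)) * w x
          = ((Real.exp (‖y‖^2/h) : ℝ) : ℂ) * (Real.exp (-‖x - y‖^2/h) • g x) := by
        intro x
        have hsc : Real.exp (t * ⟪x, ξ⟫) * Real.exp (-‖x‖^2/h)
            = Real.exp (‖y‖^2/h) * Real.exp (-‖x - y‖^2/h) := by
          rw [← Real.exp_add, ← Real.exp_add]
          congr 1
          rw [hy, norm_sub_sq_real, real_inner_smul_right]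
          field_simp
          ring
        rw [hw]
        rw [show ((t:ℂ) * (⟪x, ξ⟫ : ℂ)) = ((t * ⟪x, ξ⟫ : ℝ) : ℂ) by push_cast; ring,
          ← Complex.ofReal_exp]
        simp only [Complex.real_smul, ← mul_assoc, ← Complex.ofReal_mul]
        rw [hsc]
      rw [hΦ]
      simp only [hkey]
      rw [integral_const_mul]
      have := hint y
      simp only [Complex.real_smul] at this ⊢
      rw [this, mul_zero]
    -- differentiability
    have hder : ∀ z₀ : ℂ, DifferentiableAt ℂ Φ z₀ := by
      intro z₀
      have hcont' : Continuous fun x : EuclideanSpace ℝ (Fin d) =>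
          Complex.exp (z₀ * (⟪x, ξ⟫ : ℂ)) * (⟪x, ξ⟫ : ℂ) * w x :=
        ((Complex.continuous_exp.comp
          (continuous_const.mul (Complex.continuous_ofReal.comp (hinner ξ)))).mul
          (Complex.continuous_ofReal.comp (hinner ξ))).mul hwcont
      have key := hasDerivAt_integral_of_dominated_loc_of_deriv_le (μ := volume)
        (F := fun (z : ℂ) x => Complex.exp (z * (⟪x, ξ⟫ : ℂ)) * w x)
        (F' := fun (z : ℂ) x => Complex.exp (z * (⟪x, ξ⟫ : ℂ)) * (⟪x, ξ⟫ : ℂ) * w x)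
        (bound := fun x => Real.exp ((‖z₀‖+2)*‖ξ‖*‖x‖ - ‖x‖^2/h) * C)
        (Metric.ball_mem_nhds z₀ one_pos)
        (Filter.Eventually.of_forall fun z => (hInt z).1)
        (hInt z₀)
        hcont'.aestronglyMeasurable
        ?_ ((aux_integrable hh ((‖z₀‖+2)*‖ξ‖)).mul_const C) ?_
      · exact key.2.differentiableAt
      · filter_upwards with x
        intro z hz
        have hr : |⟪x, ξ⟫| ≤ ‖x‖ * ‖ξ‖ := abs_real_inner_le_norm x ξ
        have hz1 : ‖z‖ ≤ ‖z₀‖ + 1 := by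
          have hzz := mem_ball_iff_norm.mp hz
          calc ‖z‖ = ‖z₀ + (z - z₀)‖ := by ring_nf
            _ ≤ ‖z₀‖ + ‖z - z₀‖ := norm_add_le _ _
            _ ≤ ‖z₀‖ + 1 := by linarith
        have h1 : ‖Complex.exp (z * (⟪x, ξ⟫ : ℂ))‖ = Real.exp (z.re * ⟪x, ξ⟫) := by
          rw [Complex.norm_exp]
          congr 1
          simp [Complex.mul_re]
        rw [norm_mul, norm_mul, h1, norm_smul]
        simp only [Complex.norm_real, Real.norm_eq_abs, Real.abs_exp]
        have h2 : z.re * ⟪x, ξ⟫ ≤ (‖z₀‖+1)*‖ξ‖*‖x‖ := by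
          calc z.re * ⟪x, ξ⟫ ≤ |z.re * ⟪x, ξ⟫| := le_abs_self _
            _ = |z.re| * |⟪x, ξ⟫| := abs_mul _ _
            _ ≤ (‖z₀‖+1) * (‖x‖ * ‖ξ‖) := by
                refine mul_le_mul ?_ hr (abs_nonneg _) (by positivity)
                refine le_trans ?_ hz1
                exact Complex.abs_re_le_norm z
            _ = (‖z₀‖+1)*‖ξ‖*‖x‖ := by ring
        have h3 : |⟪x, ξ⟫| ≤ Real.exp (‖ξ‖*‖x‖) := by
          calc |⟪x, ξ⟫| ≤ ‖x‖*‖ξ‖ := hr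
            _ ≤ Real.exp (‖ξ‖*‖x‖) := by
                have := Real.add_one_le_exp (‖ξ‖*‖x‖)
                nlinarith
        calc Real.exp (z.re * ⟪x, ξ⟫) * |⟪x, ξ⟫| * (Real.exp (-‖x‖^2/h) * ‖g x‖)
            ≤ Real.exp ((‖z₀‖+1)*‖ξ‖*‖x‖) * Real.exp (‖ξ‖*‖x‖) *
              (Real.exp (-‖x‖^2/h) * C) := by
              gcongr
              exact hC x
          _ = Real.exp ((‖z₀‖+2)*‖ξ‖*‖x‖ - ‖x‖^2/h) * C := by
              rw [show Real.exp ((‖z₀‖+1)*‖ξ‖*‖x‖) * Real.exp (‖ξ‖*‖x‖) *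
                  (Real.exp (-‖x‖^2/h) * C)
                = Real.exp ((‖z₀‖+1)*‖ξ‖*‖x‖) * Real.exp (‖ξ‖*‖x‖) *
                  Real.exp (-‖x‖^2/h) * C by ring, ← Real.exp_add, ← Real.exp_add]
              congr 2
              ring
      · filter_upwards with x
        intro z hz
        have hd : HasDerivAt (fun z : ℂ => z * (⟪x, ξ⟫ : ℂ)) ((⟪x, ξ⟫ : ℂ)) z := by
          simpa using (hasDerivAt_id z).mul_const ((⟪x, ξ⟫ : ℂ))
        exact (hd.cexp.mul_const (w x))
    have hdiff : Differentiable ℂ Φ := fun z => hder z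
    have hAnal : AnalyticOnNhd ℂ Φ Set.univ :=
      hdiff.differentiableOn.analyticOnNhd isOpen_univ
    have hfreq : ∃ᶠ z in nhdsWithin (0:ℂ) {(0:ℂ)}ᶜ, Φ z = 0 := by
      have htend : Filter.Tendsto (fun n : ℕ => ((1/((n:ℝ)+1) : ℝ) : ℂ))
          Filter.atTop (nhdsWithin 0 {(0:ℂ)}ᶜ) := by
        apply tendsto_nhdsWithin_of_tendsto_nhds_of_eventually_within
        · have hr : Filter.Tendsto (fun n : ℕ => (1/((n:ℝ)+1) : ℝ)) Filter.atTop (nhds 0) :=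
            tendsto_one_div_add_atTop_nhds_zero_nat
          have := (Complex.continuous_ofReal.tendsto 0).comp hr
          simpa [Function.comp_def] using this
        · filter_upwards with n
          simp only [Set.mem_compl_iff, Set.mem_singleton_iff]
          intro hcontra
          rw [Complex.ofReal_eq_zero] at hcontra
          have : ((n:ℝ)+1) > 0 := by positivity
          rw [div_eq_zero_iff] at hcontra
          rcases hcontra with h' | h' <;> norm_num at h' <;> linarith
      exact htend.frequently
        (Filter.Frequently.of_forall fun n => hreal (1/((n:ℝ)+1)))
    have hzero := hAnal.eqOn_zero_of_preconnected_of_frequently_eq_zero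
      isPreconnected_univ (Set.mem_univ (0:ℂ)) hfreq
    have hF : 𝓕 w ξ = Φ (((-2*Real.pi : ℝ) : ℂ) * Complex.I) := by
      rw [Real.fourier_eq', hΦ]
      refine integral_congr_ae (Filter.Eventually.of_forall fun x => ?_)
      simp only [smul_eq_mul]
      congr 1
      push_cast
      ring
    rw [hF]
    have := hzero (Set.mem_univ (((-2*Real.pi : ℝ) : ℂ) * Complex.I))
    simpa using this
  have h𝓕 : 𝓕 w = 0 := by
    funext ξ; simpa using hFour ξ
  have hwzero : w = 0 := by
    have hinv := hwcont.fourierInv_fourier_eq hwint (by rw [h𝓕]; exact integrable_zero _ _ _)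
    rw [h𝓕] at hinv
    rw [← hinv]
    funext v
    simp [Real.fourierInv_eq]
  intro x
  have hx : w x = 0 := by rw [hwzero]; rfl
  rw [hw] at hx
  simp only [smul_eq_zero] at hx
  rcases hx with h' | h'
  · exact absurd h' (Real.exp_ne_zero _)
  · exact h'

end Aux

/-- Injectivity of Gaussian convolution: if `f : ℝ^d → E` is a bounded continuous function
with values in a complex Banach space and `∫ e^{−‖x−y‖²/h} f(x) dx = 0` for every `y`,
then `f = 0`. -/
theorem stmt_18 (d : ℕ) (h : ℝ) (hh : 0 < h)
    {E : Type*} [NormedAddCommGroup E] [NormedSpace ℂ E] [CompleteSpace E]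
    (f : EuclideanSpace ℝ (Fin d) → E)
    (hf : Continuous f) (hbdd : ∃ C : ℝ, ∀ x, ‖f x‖ ≤ C)
    (hint : ∀ y : EuclideanSpace ℝ (Fin d),
      (∫ x : EuclideanSpace ℝ (Fin d), Real.exp (-‖x - y‖ ^ 2 / h) • f x) = 0) :
    f = 0 := by
  obtain ⟨C, hC⟩ := hbdd
  have hker : ∀ y : EuclideanSpace ℝ (Fin d),
      Integrable (fun x : EuclideanSpace ℝ (Fin d) => Real.exp (-‖x - y‖^2/h) • f x) := by
    intro y
    have h1 : Integrable (fun x : EuclideanSpace ℝ (Fin d) => Real.exp (-(‖x - y‖^2/h)) * C) := by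
      have h2 := ((aux_integrable (V := EuclideanSpace ℝ (Fin d)) hh 0).comp_sub_right y).mul_const C
      simpa using h2
    refine h1.mono' (Continuous.aestronglyMeasurable
      ((Real.continuous_exp.comp (by fun_prop)).smul hf)) ?_
    filter_upwards with x
    rw [norm_smul, Real.norm_eq_abs, abs_of_pos (Real.exp_pos _), neg_div]
    exact mul_le_mul_of_nonneg_left (hC x) (Real.exp_pos _).le
  funext x₀
  show f x₀ = 0
  refine NormedSpace.eq_zero_of_forall_dual_eq_zero ℂ (fun φ => ?_)
  have hgc : Continuous fun x => φ (f x) := φ.continuous.comp hf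
  have hgb : ∀ x, ‖φ (f x)‖ ≤ ‖φ‖ * C := fun x =>
    (φ.le_opNorm _).trans (mul_le_mul_of_nonneg_left (hC x) (norm_nonneg φ))
  have hgint : ∀ y : EuclideanSpace ℝ (Fin d),
      (∫ x : EuclideanSpace ℝ (Fin d), Real.exp (-‖x - y‖ ^ 2 / h) • φ (f x)) = 0 := by
    intro y
    have h2 : ∀ x, Real.exp (-‖x - y‖^2/h) • φ (f x)
        = φ (Real.exp (-‖x - y‖^2/h) • f x) := fun x =>
      (φ.map_smul_of_tower _ _).symm
    simp_rw [h2]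
    rw [φ.integral_comp_comm (hker y), hint y, map_zero]
  exact scalar_case hh hgc hgb hgint x₀
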